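/- Let $p \in [1,\infty)$. There exists a constant $C > 0$, depending only on $p$, such that for all $R > 0$, all $a, b \in \mathbb{R}$ with $|a| \le R$ and $|b| \le R$, and all $t \in \mathbb{R}$ with $|t| \le 1$: $\big| |a+tb|^p - |a|^p - p\,t\,|a|^{p-2}a\,b \big| \le C\, |t|^{\min(p,2)}\, R^p$. -/

import Mathlib

open Real


lemma aux_rpow_sub_le {q u v : ℝ} (hq : 1 ≤ q) (hv : 0 ≤ v) (hvu : v ≤ u) :
    u ^ q - v ^ q ≤ q * u ^ (q - 1) * (u - v) := by
  have h := Convex.norm_image_sub_le_of_norm_hasDerivWithin_le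
    (f := fun x : ℝ => x ^ q) (f' := fun x : ℝ => q * x ^ (q - 1))
    (s := Set.Icc v u) (C := q * u ^ (q - 1))
    (fun x _ => (Real.hasDerivAt_rpow_const (Or.inr hq)).hasDerivWithinAt)
    (fun x hx => by
      rw [Real.norm_eq_abs, abs_mul, abs_of_nonneg (by linarith : (0:ℝ) ≤ q),
        abs_of_nonneg (Real.rpow_nonneg (hv.trans hx.1) _)]
      have : x ^ (q - 1) ≤ u ^ (q - 1) :=
        Real.rpow_le_rpow (hv.trans hx.1) hx.2 (by linarith)
      nlinarith [Real.rpow_nonneg (hv.trans hx.1) (q - 1)])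
    (convex_Icc v u) (Set.left_mem_Icc.2 hvu) (Set.right_mem_Icc.2 hvu)
  rw [Real.norm_eq_abs, Real.norm_eq_abs, abs_of_nonneg (by linarith : (0:ℝ) ≤ u - v)] at h
  exact (le_abs_self _).trans h

lemma aux_rpow_add_le {q x y : ℝ} (hq0 : 0 ≤ q) (hq1 : q ≤ 1) (hx : 0 ≤ x) (hy : 0 ≤ y) :
    (x + y) ^ q ≤ x ^ q + y ^ q := by
  have h := NNReal.rpow_add_le_add_rpow x.toNNReal y.toNNReal hq0 hq1
  have := NNReal.coe_le_coe.2 h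
  simpa [NNReal.coe_rpow, Real.coe_toNNReal x hx, Real.coe_toNNReal y hy,
    ← Real.toNNReal_add hx hy, max_eq_left (by linarith : (0:ℝ) ≤ x + y)] using this

lemma phi_eq {p x : ℝ} (hp : 1 < p) (hx : 0 ≤ x) : |x| ^ (p-2) * x = x ^ (p-1) := by
  rcases hx.eq_or_lt with h|h
  · rw [← h]
    simp [Real.zero_rpow (by intro h'; linarith [h'] : p - 1 ≠ 0)]
  · rw [abs_of_nonneg hx, ← Real.rpow_add_one h.ne']
    congr 1; ring

-- L1 : same sign (nonneg), ordered, p ≥ 2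
lemma phi_lip_L1 {p x y : ℝ} (hp2 : 2 ≤ p) (hy : 0 ≤ y) (hyx : y ≤ x) :
    |(|x| ^ (p-2) * x - |y| ^ (p-2) * y)| ≤ (p-1) * (max |x| |y|) ^ (p-2) * |x - y| := by
  have hx : 0 ≤ x := hy.trans hyx
  have hp1 : (1:ℝ) < p := by linarith
  rw [phi_eq hp1 hx, phi_eq hp1 hy]
  have hmono : y ^ (p-1) ≤ x ^ (p-1) := Real.rpow_le_rpow hy hyx (by linarith)
  rw [abs_of_nonneg (by linarith), abs_of_nonneg (by linarith : (0:ℝ) ≤ x - y)]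
  have h := aux_rpow_sub_le (by linarith : (1:ℝ) ≤ p - 1) hy hyx
  have he : x ^ (p - 1 - 1) = x ^ (p-2) := by congr 1; ring
  rw [he] at h
  refine h.trans ?_
  have hxM : x ≤ max |x| |y| := (le_abs_self x).trans (le_max_left _ _)
  have hle : x ^ (p-2) ≤ (max |x| |y|) ^ (p-2) := Real.rpow_le_rpow hx hxM (by linarith)
  have h2 : (p-1) * x ^ (p-2) ≤ (p-1) * (max |x| |y|) ^ (p-2) :=
    mul_le_mul_of_nonneg_left hle (by linarith)
  exact mul_le_mul_of_nonneg_right h2 (by linarith)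

-- L2 : mixed sign, p ≥ 2
lemma phi_lip_L2 {p x y : ℝ} (hp2 : 2 ≤ p) (hx : 0 ≤ x) (hy : y ≤ 0) :
    |(|x| ^ (p-2) * x - |y| ^ (p-2) * y)| ≤ (p-1) * (max |x| |y|) ^ (p-2) * |x - y| := by
  have hp1 : (1:ℝ) < p := by linarith
  have hphiy : |y| ^ (p-2) * y ≤ 0 := mul_nonpos_of_nonneg_of_nonpos (Real.rpow_nonneg (abs_nonneg _) _) hy
  have hphix : 0 ≤ |x| ^ (p-2) * x := mul_nonneg (Real.rpow_nonneg (abs_nonneg _) _) hx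
  rw [abs_of_nonneg (by linarith)]
  set M := max |x| |y| with hM
  have hxM : |x| ≤ M := le_max_left _ _
  have hyM : |y| ≤ M := le_max_right _ _
  have hMx : x ^ (p-2) ≤ M ^ (p-2) :=
    Real.rpow_le_rpow hx ((le_abs_self x).trans hxM) (by linarith)
  have hMy : (-y) ^ (p-2) ≤ M ^ (p-2) := by
    refine Real.rpow_le_rpow (by linarith) ?_ (by linarith)
    rw [← abs_of_nonpos hy]; exact hyM
  have e1 : |x| ^ (p-2) * x = x ^ (p-2) * x := by rw [abs_of_nonneg hx]
  have e2 : |y| ^ (p-2) * y = -((-y) ^ (p-2) * (-y)) := by rw [abs_of_nonpos hy]; ring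
  rw [e1, e2, abs_of_nonneg (by linarith : (0:ℝ) ≤ x - y)]
  have hb1 : x ^ (p-2) * x ≤ M ^ (p-2) * x := by nlinarith
  have hb2 : (-y) ^ (p-2) * (-y) ≤ M ^ (p-2) * (-y) := by nlinarith
  have hMnn : 0 ≤ M ^ (p-2) := Real.rpow_nonneg (le_trans (abs_nonneg x) hxM) _
  nlinarith [mul_nonneg hMnn (by linarith : (0:ℝ) ≤ x - y)]

lemma phi_lip {p : ℝ} (hp2 : 2 ≤ p) (x y : ℝ) :
    |(|x| ^ (p-2) * x - |y| ^ (p-2) * y)| ≤ (p-1) * (max |x| |y|) ^ (p-2) * |x - y| := by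
  rcases le_total 0 x with hx|hx <;> rcases le_total 0 y with hy|hy
  · rcases le_total y x with hxy|hxy
    · exact phi_lip_L1 hp2 hy hxy
    · rw [abs_sub_comm, max_comm, abs_sub_comm x y]; exact phi_lip_L1 hp2 hx hxy
  · exact phi_lip_L2 hp2 hx hy
  · rw [abs_sub_comm, max_comm, abs_sub_comm x y]; exact phi_lip_L2 hp2 hy hx
  · rcases le_total y x with hxy|hxy
    · have h := phi_lip_L1 (x := -y) (y := -x) hp2 (by linarith) (by linarith)
      simpa [abs_neg, max_comm, sub_eq_add_neg, add_comm] using h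
    · have h := phi_lip_L1 (x := -x) (y := -y) hp2 (by linarith) (by linarith)
      rw [abs_sub_comm, abs_sub_comm x y]
      simpa [abs_neg, max_comm, sub_eq_add_neg, add_comm] using h

-- Hölder versions, 1 < p ≤ 2
lemma phi_hold_L1 {p x y : ℝ} (hp1 : 1 < p) (hp2 : p ≤ 2) (hy : 0 ≤ y) (hyx : y ≤ x) :
    |(|x| ^ (p-2) * x - |y| ^ (p-2) * y)| ≤ 2 * |x - y| ^ (p-1) := by
  have hx : 0 ≤ x := hy.trans hyx
  rw [phi_eq hp1 hx, phi_eq hp1 hy]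
  have hmono : y ^ (p-1) ≤ x ^ (p-1) := Real.rpow_le_rpow hy hyx (by linarith)
  rw [abs_of_nonneg (by linarith), abs_of_nonneg (by linarith : (0:ℝ) ≤ x - y)]
  have h : x ^ (p-1) ≤ (x - y) ^ (p-1) + y ^ (p-1) := by
    have := aux_rpow_add_le (q := p-1) (by linarith) (by linarith)
      (by linarith : (0:ℝ) ≤ x - y) hy
    simpa using this
  nlinarith [Real.rpow_nonneg (by linarith : (0:ℝ) ≤ x - y) (p-1)]

lemma phi_hold_L2 {p x y : ℝ} (hp1 : 1 < p) (hp2 : p ≤ 2) (hx : 0 ≤ x) (hy : y ≤ 0) :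
    |(|x| ^ (p-2) * x - |y| ^ (p-2) * y)| ≤ 2 * |x - y| ^ (p-1) := by
  have hphiy : |y| ^ (p-2) * y ≤ 0 := mul_nonpos_of_nonneg_of_nonpos (Real.rpow_nonneg (abs_nonneg _) _) hy
  have hphix : 0 ≤ |x| ^ (p-2) * x := mul_nonneg (Real.rpow_nonneg (abs_nonneg _) _) hx
  rw [abs_of_nonneg (by linarith), phi_eq hp1 hx]
  have e2 : |y| ^ (p-2) * y = -((-y) ^ (p-1)) := by
    have : |(-y)| ^ (p-2) * (-y) = (-y) ^ (p-1) := phi_eq hp1 (by linarith)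
    rw [abs_neg] at this; nlinarith [this]
  rw [e2, abs_of_nonneg (by linarith : (0:ℝ) ≤ x - y)]
  have h1 : x ^ (p-1) ≤ (x - y) ^ (p-1) := Real.rpow_le_rpow hx (by linarith) (by linarith)
  have h2 : (-y) ^ (p-1) ≤ (x - y) ^ (p-1) := Real.rpow_le_rpow (by linarith) (by linarith) (by linarith)
  nlinarith

lemma phi_hold {p : ℝ} (hp1 : 1 < p) (hp2 : p ≤ 2) (x y : ℝ) :
    |(|x| ^ (p-2) * x - |y| ^ (p-2) * y)| ≤ 2 * |x - y| ^ (p-1) := by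
  rcases le_total 0 x with hx|hx <;> rcases le_total 0 y with hy|hy
  · rcases le_total y x with hxy|hxy
    · exact phi_hold_L1 hp1 hp2 hy hxy
    · rw [abs_sub_comm, abs_sub_comm x y]; exact phi_hold_L1 hp1 hp2 hx hxy
  · exact phi_hold_L2 hp1 hp2 hx hy
  · rw [abs_sub_comm, abs_sub_comm x y]; exact phi_hold_L2 hp1 hp2 hy hx
  · rcases le_total y x with hxy|hxy
    · have h := phi_hold_L1 (x := -y) (y := -x) hp1 hp2 (by linarith) (by linarith)
      simpa [abs_neg, sub_eq_add_neg, add_comm] using h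
    · have h := phi_hold_L1 (x := -x) (y := -y) hp1 hp2 (by linarith) (by linarith)
      rw [abs_sub_comm, abs_sub_comm x y]
      simpa [abs_neg, sub_eq_add_neg, add_comm] using h


section helpers
variable {p : ℝ}

lemma stmt15_uIcc_abs {t : ℝ} : ∀ s ∈ Set.uIcc (0:ℝ) t, |s| ≤ |t| := by
  intro s hs
  rcases Set.mem_uIcc.mp hs with ⟨h1, h2⟩ | ⟨h1, h2⟩
  · rw [abs_of_nonneg h1]; exact h2.trans (le_abs_self t)
  · rw [abs_of_nonpos h2]; exact (neg_le_neg h1).trans (neg_le_abs t)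

lemma stmt15_deriv (hp1 : 1 < p) (a b : ℝ) (s : ℝ) :
    HasDerivAt (fun u : ℝ => |a + u * b| ^ p - u * (p * (|a| ^ (p-2) * a) * b))
      (p * |a + s * b| ^ (p-2) * (a + s * b) * b - p * (|a| ^ (p-2) * a) * b) s := by
  have h1 : HasDerivAt (fun u : ℝ => a + u * b) b s := by
    simpa using ((hasDerivAt_id s).mul_const b).const_add a
  have h2 : HasDerivAt (fun u : ℝ => |a + u * b| ^ p)
      (p * |a + s * b| ^ (p-2) * (a + s * b) * b) s := by
    have := (hasDerivAt_abs_rpow (a + s * b) hp1).comp s h1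
    exact this
  have h3 : HasDerivAt (fun u : ℝ => u * (p * (|a| ^ (p-2) * a) * b))
      (p * (|a| ^ (p-2) * a) * b) s := by
    simpa using (hasDerivAt_id s).mul_const (p * (|a| ^ (p-2) * a) * b)
  exact h2.sub h3

end helpers

lemma stmt15_mvt {p : ℝ} (hp1 : 1 < p) (a b t D : ℝ)
    (hD : ∀ s ∈ Set.uIcc (0:ℝ) t,
      |p * |a + s * b| ^ (p-2) * (a + s * b) * b - p * (|a| ^ (p-2) * a) * b| ≤ D) :
    |(|a + t * b| ^ p - |a| ^ p - p * t * (|a| ^ (p-2) * a) * b)| ≤ D * |t| := by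
  have h := Convex.norm_image_sub_le_of_norm_hasDerivWithin_le
    (f := fun u : ℝ => |a + u * b| ^ p - u * (p * (|a| ^ (p-2) * a) * b))
    (f' := fun s : ℝ => p * |a + s * b| ^ (p-2) * (a + s * b) * b - p * (|a| ^ (p-2) * a) * b)
    (fun s _ => (stmt15_deriv hp1 a b s).hasDerivWithinAt)
    (fun s hs => by rw [Real.norm_eq_abs]; exact hD s hs)
    (convex_uIcc 0 t) Set.left_mem_uIcc Set.right_mem_uIcc
  rw [Real.norm_eq_abs, Real.norm_eq_abs] at h
  simp only [zero_mul, add_zero, mul_zero, sub_zero] at h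
  have e : |a + t * b| ^ p - |a| ^ p - p * t * (|a| ^ (p-2) * a) * b
      = |a + t * b| ^ p - t * (p * (|a| ^ (p-2) * a) * b) - |a| ^ p := by ring
  rw [e]
  simpa using h


/-- For `p ∈ [1,∞)` there is `C = C(p) > 0` such that for all
`R > 0`, `|a| ≤ R`, `|b| ≤ R` and `|t| ≤ 1`:
`| |a+tb|^p - |a|^p - p t |a|^{p-2} a b | ≤ C |t|^{min(p,2)} R^p`. -/
theorem stmt_15 (p : ℝ) (hp : 1 ≤ p) :
    ∃ C : ℝ, 0 < C ∧
      ∀ R : ℝ, 0 < R → ∀ a b : ℝ, |a| ≤ R → |b| ≤ R → ∀ t : ℝ, |t| ≤ 1 →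
        |(|a + t * b| ^ p - |a| ^ p - p * t * (|a| ^ (p - 2) * a) * b)| ≤
          C * |t| ^ min p 2 * R ^ p := by
  have h2pow : (0:ℝ) < (2:ℝ) ^ (p - 2) := Real.rpow_pos_of_pos (by norm_num) _
  have hCnn : 0 ≤ p * (p - 1) * (2:ℝ) ^ (p - 2) :=
    mul_nonneg (mul_nonneg (by linarith) (by linarith)) h2pow.le
  refine ⟨p * (p - 1) * (2:ℝ) ^ (p - 2) + 2 * p + 2, by nlinarith, ?_⟩
  intro R hR a b ha hb t ht
  set C := p * (p - 1) * (2:ℝ) ^ (p - 2) + 2 * p + 2 with hCdef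
  have hC2 : 2 * p ≤ C := by nlinarith
  rcases eq_or_ne t 0 with rfl | ht0
  · have hmin : (0:ℝ) < min p 2 := lt_min (by linarith) (by norm_num)
    simp [Real.zero_rpow hmin.ne']
  have htpos : 0 < |t| := abs_pos.2 ht0
  rcases eq_or_lt_of_le hp with hp1 | hp1
  · -- p = 1
    subst hp1
    have hC4 : C = 4 := by norm_num [hCdef]
    have hmin : min (1:ℝ) 2 = 1 := min_eq_left (by norm_num)
    rw [hmin, hC4]; simp only [Real.rpow_one]
    have hsgn : |(|a| ^ ((1:ℝ) - 2) * a)| ≤ 1 := by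
      rcases eq_or_ne a 0 with rfl | ha0
      · simp
      · rw [abs_mul, abs_of_nonneg (Real.rpow_nonneg (abs_nonneg a) _),
          ← Real.rpow_add_one (abs_ne_zero.2 ha0)]
        norm_num
    have key1 : |(|a + t * b| - |a|)| ≤ |t| * R := by
      have h := abs_abs_sub_abs_le_abs_sub (a + t * b) a
      have h2 : |a + t * b - a| = |t| * |b| := by
        rw [show a + t * b - a = t * b by ring, abs_mul]
      calc |(|a + t * b| - |a|)| ≤ |a + t * b - a| := h
        _ = |t| * |b| := h2
        _ ≤ |t| * R := mul_le_mul_of_nonneg_left hb (abs_nonneg t)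
    have key2 : |1 * t * (|a| ^ ((1:ℝ) - 2) * a) * b| ≤ |t| * R := by
      rw [abs_mul, abs_mul, abs_mul, abs_one, one_mul]
      calc |t| * |(|a| ^ ((1:ℝ) - 2) * a)| * |b| ≤ (|t| * 1) * R := by
            apply mul_le_mul (mul_le_mul_of_nonneg_left hsgn (abs_nonneg t)) hb (abs_nonneg b)
              (by positivity)
        _ = |t| * R := by ring
    have habs : |(|a + t * b| - |a|) - 1 * t * (|a| ^ ((1:ℝ) - 2) * a) * b|
        ≤ |(|a + t * b| - |a|)| + |1 * t * (|a| ^ ((1:ℝ) - 2) * a) * b| := by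
      have := abs_add_le (|a + t * b| - |a|) (-(1 * t * (|a| ^ ((1:ℝ) - 2) * a) * b))
      simpa [sub_eq_add_neg] using this
    have hfin : (2:ℝ) * (|t| * R) ≤ 4 * |t| * R := by nlinarith [mul_pos htpos hR]
    calc |(|a + t * b| - |a| - 1 * t * (|a| ^ ((1:ℝ) - 2) * a) * b)|
        ≤ |(|a + t * b| - |a|)| + |1 * t * (|a| ^ ((1:ℝ) - 2) * a) * b| := habs
      _ ≤ |t| * R + |t| * R := add_le_add key1 key2
      _ = 2 * (|t| * R) := by ring
      _ ≤ 4 * |t| * R := hfin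
  · -- 1 < p
    rcases le_total p 2 with hple | hpge
    · -- 1 < p ≤ 2
      have hm : min p 2 = p := min_eq_left hple
      rw [hm]
      have eT : |t| ^ (p - 1) * |t| = |t| ^ p := by
        rw [← Real.rpow_add_one (abs_ne_zero.2 ht0)]; congr 1; ring
      have eR : R ^ (p - 1) * R = R ^ p := by
        rw [← Real.rpow_add_one hR.ne']; congr 1; ring
      have hbound : ∀ s ∈ Set.uIcc (0:ℝ) t,
          |p * |a + s * b| ^ (p - 2) * (a + s * b) * b - p * (|a| ^ (p - 2) * a) * b|
            ≤ p * R * (2 * (|t| ^ (p - 1) * R ^ (p - 1))) := by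
        intro s hs
        have e : p * |a + s * b| ^ (p - 2) * (a + s * b) * b - p * (|a| ^ (p - 2) * a) * b
            = p * b * ((|a + s * b| ^ (p - 2) * (a + s * b)) - (|a| ^ (p - 2) * a)) := by ring
        rw [e, abs_mul, abs_mul, abs_of_pos (by linarith : (0:ℝ) < p)]
        have hφ : |(|a + s * b| ^ (p - 2) * (a + s * b)) - (|a| ^ (p - 2) * a)|
            ≤ 2 * |s * b| ^ (p - 1) := by
          have := phi_hold hp1 hple (a + s * b) a
          simpa using this
        have hsb : |s * b| ≤ |t| * R := by
          rw [abs_mul]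
          exact mul_le_mul (stmt15_uIcc_abs s hs) hb (abs_nonneg b) (abs_nonneg t)
        have hsb2 : |s * b| ^ (p - 1) ≤ |t| ^ (p - 1) * R ^ (p - 1) := by
          rw [← Real.mul_rpow (abs_nonneg t) hR.le]
          exact Real.rpow_le_rpow (abs_nonneg _) hsb (by linarith)
        calc p * |b| * |(|a + s * b| ^ (p - 2) * (a + s * b)) - (|a| ^ (p - 2) * a)|
            ≤ p * |b| * (2 * (|t| ^ (p - 1) * R ^ (p - 1))) := by
              apply mul_le_mul_of_nonneg_left _ (mul_nonneg (by linarith) (abs_nonneg b))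
              linarith
          _ ≤ p * R * (2 * (|t| ^ (p - 1) * R ^ (p - 1))) := by
              apply mul_le_mul_of_nonneg_right _ (by positivity)
              exact mul_le_mul_of_nonneg_left hb (by linarith)
      have h := stmt15_mvt hp1 a b t _ hbound
      refine h.trans ?_
      have e2 : p * R * (2 * (|t| ^ (p - 1) * R ^ (p - 1))) * |t|
          = 2 * p * (|t| ^ (p - 1) * |t|) * (R ^ (p - 1) * R) := by ring
      rw [e2, eT, eR]
      have hpos : 0 < |t| ^ p * R ^ p :=
        mul_pos (Real.rpow_pos_of_pos htpos p) (Real.rpow_pos_of_pos hR p)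
      nlinarith [hpos, hC2]
    · -- p ≥ 2
      have hm : min p 2 = 2 := min_eq_right hpge
      rw [hm]
      have eT2 : |t| ^ (2:ℝ) = |t| * |t| := by
        rw [show (2:ℝ) = 1 + 1 by norm_num, Real.rpow_add htpos, Real.rpow_one]
      have eR2 : R ^ (p - 2) * R * R = R ^ p := by
        rw [← Real.rpow_add_one hR.ne', ← Real.rpow_add_one hR.ne']; congr 1; ring
      have hbound : ∀ s ∈ Set.uIcc (0:ℝ) t,
          |p * |a + s * b| ^ (p - 2) * (a + s * b) * b - p * (|a| ^ (p - 2) * a) * b|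
            ≤ p * R * ((p - 1) * ((2:ℝ) ^ (p - 2) * R ^ (p - 2)) * (|t| * R)) := by
        intro s hs
        have e : p * |a + s * b| ^ (p - 2) * (a + s * b) * b - p * (|a| ^ (p - 2) * a) * b
            = p * b * ((|a + s * b| ^ (p - 2) * (a + s * b)) - (|a| ^ (p - 2) * a)) := by ring
        rw [e, abs_mul, abs_mul, abs_of_pos (by linarith : (0:ℝ) < p)]
        have hsb : |s * b| ≤ |t| * R := by
          rw [abs_mul]
          exact mul_le_mul (stmt15_uIcc_abs s hs) hb (abs_nonneg b) (abs_nonneg t)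
        have hφ : |(|a + s * b| ^ (p - 2) * (a + s * b)) - (|a| ^ (p - 2) * a)|
            ≤ (p - 1) * (max |a + s * b| |a|) ^ (p - 2) * |(a + s * b) - a| :=
          phi_lip hpge (a + s * b) a
        have hsba : |(a + s * b) - a| = |s * b| := by rw [show (a + s * b) - a = s * b by ring]
        have hmax : max |a + s * b| |a| ≤ 2 * R := by
          have h1 : |a + s * b| ≤ |a| + |s * b| := abs_add_le a (s * b)
          have h2 : |t| * R ≤ 1 * R := mul_le_mul_of_nonneg_right ht hR.le
          refine max_le (by nlinarith) (by linarith)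
        have hmaxp : (max |a + s * b| |a|) ^ (p - 2) ≤ (2:ℝ) ^ (p - 2) * R ^ (p - 2) := by
          rw [← Real.mul_rpow (by norm_num) hR.le]
          exact Real.rpow_le_rpow (le_trans (abs_nonneg _) (le_max_left _ _)) hmax (by linarith)
        have hφ2 : |(|a + s * b| ^ (p - 2) * (a + s * b)) - (|a| ^ (p - 2) * a)|
            ≤ (p - 1) * ((2:ℝ) ^ (p - 2) * R ^ (p - 2)) * (|t| * R) := by
          refine (hφ.trans_eq (by rw [hsba])).trans ?_
          apply mul_le_mul (mul_le_mul_of_nonneg_left hmaxp (by linarith)) hsb (abs_nonneg _)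
            (mul_nonneg (by linarith) (by positivity))
        calc p * |b| * |(|a + s * b| ^ (p - 2) * (a + s * b)) - (|a| ^ (p - 2) * a)|
            ≤ p * |b| * ((p - 1) * ((2:ℝ) ^ (p - 2) * R ^ (p - 2)) * (|t| * R)) := by
              exact mul_le_mul_of_nonneg_left hφ2 (mul_nonneg (by linarith) (abs_nonneg b))
          _ ≤ p * R * ((p - 1) * ((2:ℝ) ^ (p - 2) * R ^ (p - 2)) * (|t| * R)) := by
              apply mul_le_mul_of_nonneg_right _
                (mul_nonneg (mul_nonneg (by linarith) (by positivity)) (by positivity))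
              exact mul_le_mul_of_nonneg_left hb (by linarith)
      have h := stmt15_mvt hp1 a b t _ hbound
      refine h.trans ?_
      have e2 : p * R * ((p - 1) * ((2:ℝ) ^ (p - 2) * R ^ (p - 2)) * (|t| * R)) * |t|
          = (p * (p - 1) * (2:ℝ) ^ (p - 2)) * (R ^ (p - 2) * R * R) * (|t| * |t|) := by ring
      rw [e2, eR2, ← eT2]
      have hC1 : p * (p - 1) * (2:ℝ) ^ (p - 2) ≤ C := by rw [hCdef]; linarith
      have hpos : 0 < R ^ p * |t| ^ (2:ℝ) :=
        mul_pos (Real.rpow_pos_of_pos hR p) (Real.rpow_pos_of_pos htpos 2)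
      nlinarith [hpos, hC1]
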